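/- If 4 divides b, then ∑_{a : gcd(a,b)=1, 1 ≤ a ≤ b} (-1)^{inv(a,b)} = 0. -/

import Mathlib

/-- The sawtooth function ((x)): 0 if x is an integer, else x - ⌊x⌋ - 1/2. -/
def sawtooth (x : ℚ) : ℚ := if x.den = 1 then 0 else x - ⌊x⌋ - 1/2

/-- The Dedekind sum s(a,b) = ∑_{i=1}^{b-1} (i/b)·((a·i/b)). -/
def dedekindSum (a b : ℕ) : ℚ :=
  ∑ i ∈ Finset.Icc 1 (b - 1), (i : ℚ) / (b : ℚ) * sawtooth ((a * i : ℕ) / (b : ℚ))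

/-- Representative of a·x mod b in {1, ..., b}. -/
def modRep (a b x : ℕ) : ℕ := if a * x % b = 0 then b else a * x % b

/-- inv(a,b): number of pairs 1 ≤ i < j ≤ b with a·i mod b > a·j mod b
(representatives in {1,...,b}). -/
def invNum (a b : ℕ) : ℕ :=
  ((Finset.Icc 1 b ×ˢ Finset.Icc 1 b).filter
    (fun p => p.1 < p.2 ∧ modRep a b p.2 < modRep a b p.1)).card

lemma modRep_le (a b x : ℕ) (hb : 0 < b) : modRep a b x ≤ b := by
  unfold modRep
  split
  · exact le_rfl
  · exact le_of_lt (Nat.mod_lt _ hb)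

lemma mod_ne_zero (a b x : ℕ) (ha : Nat.Coprime a b) (hx1 : 1 ≤ x) (hx2 : x < b) :
    a * x % b ≠ 0 := by
  intro h
  have hdvd : b ∣ a * x := Nat.dvd_of_mod_eq_zero h
  have : b ∣ x := (Nat.Coprime.dvd_of_dvd_mul_left (Nat.Coprime.symm ha) hdvd)
  have := Nat.le_of_dvd (by omega) this
  omega

lemma modRep_lt (a b x : ℕ) (ha : Nat.Coprime a b) (hx1 : 1 ≤ x) (hx2 : x < b) :
    1 ≤ modRep a b x ∧ modRep a b x < b := by
  have h := mod_ne_zero a b x ha hx1 hx2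
  unfold modRep
  rw [if_neg h]
  exact ⟨Nat.one_le_iff_ne_zero.mpr h, Nat.mod_lt _ (by omega)⟩

lemma modRep_self (a b : ℕ) : modRep a b b = b := by
  simp [modRep, Nat.mul_mod_left]

lemma modRep_inj (a b x y : ℕ) (ha : Nat.Coprime a b)
    (hx : x ∈ Finset.Icc 1 b) (hy : y ∈ Finset.Icc 1 b)
    (h : modRep a b x = modRep a b y) : x = y := by
  simp only [Finset.mem_Icc] at hx hy
  rcases eq_or_ne x b with hxb | hxb
  · rcases eq_or_ne y b with hyb | hyb
    · rw [hxb, hyb]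
    · have := modRep_lt a b y ha hy.1 (by omega)
      rw [hxb, modRep_self] at h
      omega
  · have hxlt := modRep_lt a b x ha hx.1 (by omega)
    rcases eq_or_ne y b with hyb | hyb
    · rw [hyb, modRep_self] at h; omega
    · have hylt := modRep_lt a b y ha hy.1 (by omega)
      have hx0 := mod_ne_zero a b x ha hx.1 (by omega)
      have hy0 := mod_ne_zero a b y ha hy.1 (by omega)
      have hmod : a * x % b = a * y % b := by
        unfold modRep at h
        rwa [if_neg hx0, if_neg hy0] at h
      have : x % b = y % b :=
        Nat.ModEq.cancel_left_of_coprime (by rwa [Nat.coprime_comm] at ha) hmod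
      rw [Nat.mod_eq_of_lt (by omega), Nat.mod_eq_of_lt (by omega)] at this
      exact this

lemma modRep_neg (a b x : ℕ) (ha : Nat.Coprime a b) (hab : a ≤ b)
    (hx1 : 1 ≤ x) (hx2 : x < b) :
    modRep (b - a) b x = b - modRep a b x := by
  have hb : 0 < b := by omega
  set r := a * x % b with hr
  have hr0 : r ≠ 0 := mod_ne_zero a b x ha hx1 hx2
  have hrlt : r < b := Nat.mod_lt _ hb
  set s := (b - a) * x % b with hs
  have hslt : s < b := Nat.mod_lt _ hb
  have hsum : (s + r) % b = 0 := by
    rw [hs, hr, ← Nat.add_mod]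
    have : (b - a) * x + a * x = b * x := by
      rw [← Nat.add_mul]
      congr 1
      omega
    rw [this, Nat.mul_mod_right]
  have hdvd : b ∣ s + r := Nat.dvd_of_mod_eq_zero hsum
  have hsr : s + r = b := by
    obtain ⟨k, hk⟩ := hdvd
    rcases Nat.lt_or_ge k 2 with hk2 | hk2
    · interval_cases k <;> omega
    · nlinarith
  have hs0 : s ≠ 0 := by omega
  have : modRep (b - a) b x = s := by unfold modRep; rw [if_neg hs0]
  rw [this]
  have : modRep a b x = r := by unfold modRep; rw [if_neg hr0]
  rw [this]
  omega

lemma invNum_add (a b : ℕ) (ha : Nat.Coprime a b) (ha1 : 1 ≤ a) (ha2 : a < b) :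
    invNum a b + invNum (b - a) b =
      ((Finset.Icc 1 b ×ˢ Finset.Icc 1 b).filter
        (fun p => p.1 < p.2 ∧ p.2 < b)).card := by
  have hb : 0 < b := by omega
  have ha' : Nat.Coprime (b - a) b := by
    exact (Nat.coprime_self_sub_left (le_of_lt ha2)).mpr ha
  set S := Finset.Icc 1 b ×ˢ Finset.Icc 1 b with hS
  set A := S.filter (fun p => p.1 < p.2 ∧ modRep a b p.2 < modRep a b p.1) with hA
  set A' := S.filter (fun p => p.1 < p.2 ∧ modRep (b - a) b p.2 < modRep (b - a) b p.1) with hA'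
  set T := S.filter (fun p => p.1 < p.2 ∧ p.2 < b) with hT
  have key : ∀ (c : ℕ), Nat.Coprime c b → ∀ i j : ℕ, i < j → j ≤ b →
      modRep c b j < modRep c b i → j < b := by
    intro c hc i j hij hjb hlt
    by_contra hjb'
    have hjeq : j = b := by omega
    rw [hjeq, modRep_self] at hlt
    have := modRep_le c b i hb
    omega
  have hunion : A ∪ A' = T := by
    ext ⟨i, j⟩
    simp only [hA, hA', hT, Finset.mem_union, Finset.mem_filter, hS,
      Finset.mem_product, Finset.mem_Icc]
    constructor
    · rintro (⟨⟨⟨hi1, hi2⟩, hj1, hj2⟩, hij, hlt⟩ | ⟨⟨⟨hi1, hi2⟩, hj1, hj2⟩, hij, hlt⟩)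
      · exact ⟨⟨⟨hi1, hi2⟩, hj1, hj2⟩, hij, key a ha i j hij hj2 hlt⟩
      · exact ⟨⟨⟨hi1, hi2⟩, hj1, hj2⟩, hij, key (b - a) ha' i j hij hj2 hlt⟩
    · rintro ⟨⟨⟨hi1, hi2⟩, hj1, hj2⟩, hij, hjb⟩
      have hib : i < b := by omega
      have hne : modRep a b i ≠ modRep a b j := by
        intro h
        have := modRep_inj a b i j ha (Finset.mem_Icc.mpr ⟨hi1, hi2⟩)
          (Finset.mem_Icc.mpr ⟨hj1, hj2⟩) h
        omega
      have hfi := modRep_lt a b i ha hi1 hib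
      have hfj := modRep_lt a b j ha hj1 hjb
      rcases Nat.lt_or_ge (modRep a b j) (modRep a b i) with hlt | hge
      · exact Or.inl ⟨⟨⟨hi1, hi2⟩, hj1, hj2⟩, hij, hlt⟩
      · refine Or.inr ⟨⟨⟨hi1, hi2⟩, hj1, hj2⟩, hij, ?_⟩
        rw [modRep_neg a b i ha (le_of_lt ha2) hi1 hib,
          modRep_neg a b j ha (le_of_lt ha2) hj1 hjb]
        omega
  have hdisj : Disjoint A A' := by
    rw [Finset.disjoint_left]
    rintro ⟨i, j⟩ hpA hpA'
    simp only [hA, hA', Finset.mem_filter, hS, Finset.mem_product, Finset.mem_Icc] at hpA hpA'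
    obtain ⟨⟨⟨hi1, hi2⟩, hj1, hj2⟩, hij, hlt⟩ := hpA
    obtain ⟨-, -, hlt'⟩ := hpA'
    have hjb : j < b := key a ha i j hij hj2 hlt
    have hib : i < b := by omega
    rw [modRep_neg a b i ha (le_of_lt ha2) hi1 hib,
      modRep_neg a b j ha (le_of_lt ha2) hj1 hjb] at hlt'
    have hfi := modRep_lt a b i ha hi1 hib
    have hfj := modRep_lt a b j ha hj1 hjb
    omega
  have := Finset.card_union_of_disjoint hdisj
  rw [hunion] at this
  rw [invNum, invNum, ← hS]
  rw [← hA, ← hA']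
  omega

lemma card_T (b : ℕ) (hb : 1 ≤ b) :
    2 * ((Finset.Icc 1 b ×ˢ Finset.Icc 1 b).filter
        (fun p => p.1 < p.2 ∧ p.2 < b)).card = (b - 1) * (b - 2) := by
  set s := Finset.Icc 1 (b - 1) with hs
  set U := (s ×ˢ s).filter (fun p : ℕ × ℕ => p.1 < p.2) with hU
  set V := (s ×ˢ s).filter (fun p : ℕ × ℕ => p.2 < p.1) with hV
  have hTU : (Finset.Icc 1 b ×ˢ Finset.Icc 1 b).filter
      (fun p => p.1 < p.2 ∧ p.2 < b) = U := by
    ext ⟨i, j⟩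
    simp only [hU, hs, Finset.mem_filter, Finset.mem_product, Finset.mem_Icc]
    omega
  have hUV : U.card = V.card := by
    apply Finset.card_bij (fun p _ => p.swap)
    · rintro ⟨i, j⟩ hp
      simp only [hU, hV, Finset.mem_filter, Finset.mem_product] at *
      exact ⟨⟨hp.1.2, hp.1.1⟩, hp.2⟩
    · rintro ⟨i, j⟩ - ⟨k, l⟩ - h
      exact Prod.swap_injective h
    · rintro ⟨i, j⟩ hq
      refine ⟨(j, i), ?_, rfl⟩
      simp only [hU, hV, Finset.mem_filter, Finset.mem_product] at *
      exact ⟨⟨hq.1.2, hq.1.1⟩, hq.2⟩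
  have hdisj : Disjoint U V := by
    rw [Finset.disjoint_left]
    rintro ⟨i, j⟩ hpU hpV
    simp only [hU, hV, Finset.mem_filter] at hpU hpV
    omega
  have hunion : U ∪ V = s.offDiag := by
    ext ⟨i, j⟩
    simp only [hU, hV, Finset.mem_union, Finset.mem_filter, Finset.mem_product,
      Finset.mem_offDiag]
    constructor
    · rintro (⟨⟨h1, h2⟩, h3⟩ | ⟨⟨h1, h2⟩, h3⟩) <;> exact ⟨h1, h2, by omega⟩
    · rintro ⟨h1, h2, h3⟩
      rcases Nat.lt_or_ge i j with h | h
      · exact Or.inl ⟨⟨h1, h2⟩, h⟩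
      · refine Or.inr ⟨⟨h1, h2⟩, ?_⟩
        rcases Nat.lt_or_ge j i with h' | h'
        · exact h'
        · exact absurd (Nat.le_antisymm h' h) h3
  have hcard := Finset.card_union_of_disjoint hdisj
  rw [hunion, Finset.offDiag_card] at hcard
  have hscard : s.card = b - 1 := by rw [hs, Nat.card_Icc]; omega
  rw [hscard] at hcard
  rw [hTU]
  have hsq : (b - 1) * (b - 1) = (b - 1) * (b - 2) + (b - 1) := by
    rcases Nat.lt_or_ge b 2 with h | h
    · interval_cases b <;> simp
    · have h2 : b - 1 = (b - 2) + 1 := by omega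
      rw [h2]; ring
  omega

theorem stmt13 (b : ℕ) (hb : 4 ∣ b) :
    ∑ a ∈ (Finset.Icc 1 b).filter (fun a => Nat.Coprime a b),
      ((-1 : ℤ)) ^ invNum a b = 0 := by
  rcases Nat.eq_zero_or_pos b with rfl | hbpos
  · simp
  have hb4 : 4 ≤ b := Nat.le_of_dvd hbpos hb
  apply Finset.sum_involution (fun a _ => b - a)
  · intro a ha
    simp only [Finset.mem_filter, Finset.mem_Icc] at ha
    obtain ⟨⟨ha1, ha2⟩, hcop⟩ := ha
    have hab : a < b := by
      rcases Nat.lt_or_ge a b with h | h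
      · exact h
      · exfalso
        have : a = b := by omega
        rw [this] at hcop
        have := hcop.eq_one_of_dvd dvd_rfl
        omega
    -- parity
    have hadd := invNum_add a b hcop ha1 hab
    have hcT := card_T b (by omega)
    obtain ⟨k, hk⟩ := hb
    have hk1 : 1 ≤ k := by omega
    have hodd : Odd (invNum a b + invNum (b - a) b) := by
      have h2 : (b - 1) * (b - 2) = 2 * ((b - 1) * (2 * k - 1)) := by
        have hb2 : b - 2 = 2 * (2 * k - 1) := by omega
        rw [hb2]; ring
      rw [h2] at hcT
      have heq : invNum a b + invNum (b - a) b = (b - 1) * (2 * k - 1) := by omega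
      rw [heq]
      exact Odd.mul (by exact ⟨2 * k - 1, by omega⟩) ⟨k - 1, by omega⟩
    have hpow : ((-1 : ℤ)) ^ (invNum a b + invNum (b - a) b) = -1 := Odd.neg_one_pow hodd
    rw [pow_add] at hpow
    rcases neg_one_pow_eq_or ℤ (invNum a b) with h1 | h1 <;>
      rcases neg_one_pow_eq_or ℤ (invNum (b - a) b) with h2 | h2 <;>
      rw [h1, h2] at hpow ⊢ <;> omega
  · intro a ha _
    simp only [Finset.mem_filter, Finset.mem_Icc] at ha
    obtain ⟨⟨ha1, ha2⟩, hcop⟩ := ha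
    intro h
    have h2a : 2 * a = b := by omega
    have hdvd : a ∣ b := ⟨2, by omega⟩
    have := hcop.eq_one_of_dvd hdvd
    omega
  · intro a ha
    simp only [Finset.mem_filter, Finset.mem_Icc] at ha ⊢
    obtain ⟨⟨ha1, ha2⟩, hcop⟩ := ha
    have hab : a < b := by
      rcases Nat.lt_or_ge a b with h | h
      · exact h
      · exfalso
        have : a = b := by omega
        rw [this] at hcop
        have := hcop.eq_one_of_dvd dvd_rfl
        omega
    exact ⟨⟨by omega, by omega⟩, (Nat.coprime_self_sub_left (le_of_lt hab)).mpr hcop⟩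
  · intro a ha
    simp only [Finset.mem_filter, Finset.mem_Icc] at ha
    omega
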